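/- Let D, k > 0, ξ = sqrt(D/k), and x ≥ 0. Define Z(t) = (1/2)·erfc(√(Dt)/ξ − x/(2√(Dt))) + (e^{2x/ξ}/2)·erfc(√(Dt)/ξ + x/(2√(Dt))) for t > 0, where erfc is the complementary error function. Then ∫₀^∞ Z(t) dt = (1/(2k))·(1 + x·√(k/D)). -/

import Mathlib

open Real Filter MeasureTheory Set Topology



noncomputable def erfc (z : ℝ) : ℝ :=
  (2 / Real.sqrt Real.pi) * ∫ w in Set.Ioi z, Real.exp (-w ^ 2)

lemma integrable_g : Integrable (fun w : ℝ => Real.exp (-w ^ 2)) := by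
  simpa using integrable_exp_neg_mul_sq (one_pos)

lemma integral_g : ∫ w : ℝ, Real.exp (-w ^ 2) = Real.sqrt π := by
  simpa using integral_gaussian 1

lemma erfc_nonneg (z : ℝ) : 0 ≤ erfc z := by
  apply mul_nonneg (by positivity)
  exact setIntegral_nonneg measurableSet_Ioi (fun w _ => (Real.exp_pos _).le)

lemma erfc_le (z : ℝ) (hz : 0 ≤ z) : erfc z ≤ 2 * Real.exp (-z ^ 2) := by
  have h1 : ∫ w in Ioi z, Real.exp (-w ^ 2) ≤
      ∫ w in Ioi z, Real.exp (-z ^ 2) * Real.exp (-(w - z) ^ 2) := by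
    apply setIntegral_mono_on (integrable_g.integrableOn)
    · exact (((integrable_g.comp_sub_right z).const_mul _).integrableOn)
    · exact measurableSet_Ioi
    · intro w hw
      rw [← Real.exp_add]
      apply Real.exp_le_exp.2
      nlinarith [le_of_lt (mem_Ioi.1 hw)]
  have h2 : ∫ w in Ioi z, Real.exp (-z ^ 2) * Real.exp (-(w - z) ^ 2) ≤
      Real.exp (-z ^ 2) * Real.sqrt π := by
    rw [integral_const_mul]
    apply mul_le_mul_of_nonneg_left _ (Real.exp_pos _).le
    calc ∫ w in Ioi z, Real.exp (-(w - z) ^ 2)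
        ≤ ∫ w : ℝ, Real.exp (-(w - z) ^ 2) := by
          apply setIntegral_le_integral (integrable_g.comp_sub_right z)
          filter_upwards with w using (Real.exp_pos _).le
      _ = Real.sqrt π := by
          rw [integral_sub_right_eq_self (fun w => Real.exp (-w ^ 2)) z]; exact integral_g
  have hπ : (0:ℝ) < Real.sqrt π := Real.sqrt_pos.2 Real.pi_pos
  have h3 := h1.trans h2
  unfold erfc
  calc (2 / Real.sqrt π) * ∫ w in Ioi z, Real.exp (-w ^ 2)
      ≤ (2 / Real.sqrt π) * (Real.exp (-z ^ 2) * Real.sqrt π) := by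
        apply mul_le_mul_of_nonneg_left h3 (by positivity)
    _ = 2 * Real.exp (-z ^ 2) := by field_simp



lemma continuous_g : Continuous (fun w : ℝ => Real.exp (-w ^ 2)) := by continuity

lemma ioi_eq (z : ℝ) : (∫ w in Ioi z, Real.exp (-w ^ 2)) =
    (∫ w : ℝ, Real.exp (-w ^ 2)) - (∫ w in Iic (0:ℝ), Real.exp (-w ^ 2))
      - ∫ w in (0:ℝ)..z, Real.exp (-w ^ 2) := by
  have h1 : (∫ w in Iic z, Real.exp (-w ^ 2)) + (∫ w in Ioi z, Real.exp (-w ^ 2))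
      = ∫ w : ℝ, Real.exp (-w ^ 2) :=
    intervalIntegral.integral_Iic_add_Ioi integrable_g.integrableOn integrable_g.integrableOn
  have h2 : (∫ w in Iic z, Real.exp (-w ^ 2)) - (∫ w in Iic (0:ℝ), Real.exp (-w ^ 2))
      = ∫ w in (0:ℝ)..z, Real.exp (-w ^ 2) :=
    intervalIntegral.integral_Iic_sub_Iic integrable_g.integrableOn integrable_g.integrableOn
  linarith

lemma hasDerivAt_erfc (z : ℝ) :
    HasDerivAt erfc (-(2 / Real.sqrt π) * Real.exp (-z ^ 2)) z := by
  have h : HasDerivAt (fun u => ∫ w in (0:ℝ)..u, Real.exp (-w ^ 2)) (Real.exp (-z ^ 2)) z :=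
    intervalIntegral.integral_hasDerivAt_right integrable_g.intervalIntegrable
      (continuous_g.stronglyMeasurableAtFilter _ _) continuous_g.continuousAt
  have h2 : HasDerivAt (fun u => (2 / Real.sqrt π) *
      ((∫ w : ℝ, Real.exp (-w ^ 2)) - (∫ w in Iic (0:ℝ), Real.exp (-w ^ 2))
        - ∫ w in (0:ℝ)..u, Real.exp (-w ^ 2))) (-(2 / Real.sqrt π) * Real.exp (-z ^ 2)) z := by
    have := ((hasDerivAt_const z ((∫ w : ℝ, Real.exp (-w ^ 2)) -
      (∫ w in Iic (0:ℝ), Real.exp (-w ^ 2)))).sub h).const_mul (2 / Real.sqrt π)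
    exact this.congr_deriv (by ring)
  refine h2.congr_of_eventuallyEq ?_
  filter_upwards with u
  unfold erfc
  rw [ioi_eq u]

lemma continuous_erfc : Continuous erfc :=
  continuous_iff_continuousAt.2 fun z => (hasDerivAt_erfc z).continuousAt

lemma erfc_zero : erfc 0 = 1 := by
  unfold erfc
  have := integral_gaussian_Ioi 1
  simp only [neg_mul, one_mul] at this
  rw [show (fun w : ℝ => Real.exp (-w ^ 2)) = (fun w : ℝ => Real.exp (-(1:ℝ) * w ^ 2)) by
    funext w; ring_nf]
  rw [integral_gaussian_Ioi 1]
  have hπ : (0:ℝ) < Real.sqrt π := Real.sqrt_pos.2 Real.pi_pos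
  rw [show π / 1 = π by ring]
  field_simp

lemma erfc_neg (z : ℝ) : erfc (-z) = 2 - erfc z := by
  unfold erfc
  have h0 : (∫ w in Ioi (-z), Real.exp (-w ^ 2)) = ∫ w in Iic z, Real.exp (-w ^ 2) := by
    have := integral_comp_neg_Ioi (-z) (fun x => Real.exp (-x ^ 2))
    simp only [neg_sq, neg_neg] at this
    exact this
  have h1 : (∫ w in Iic z, Real.exp (-w ^ 2)) + (∫ w in Ioi z, Real.exp (-w ^ 2))
      = Real.sqrt π := by
    rw [intervalIntegral.integral_Iic_add_Ioi integrable_g.integrableOn integrable_g.integrableOn]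
    exact integral_g
  have hπ : (0:ℝ) < Real.sqrt π := Real.sqrt_pos.2 Real.pi_pos
  rw [h0]
  field_simp
  linarith [h1]


lemma tendsto_sqrt_atTop : Tendsto Real.sqrt atTop atTop :=
  tendsto_atTop_atTop_of_monotone (fun _ _ h => Real.sqrt_le_sqrt h)
    (fun b => ⟨b ^ 2, by rw [Real.sqrt_sq_eq_abs]; exact le_abs_self b⟩)

lemma tendsto_exp_neg_sq : Tendsto (fun z : ℝ => Real.exp (-z ^ 2)) atTop (𝓝 0) :=
  Real.tendsto_exp_atBot.comp (tendsto_neg_atTop_atBot.comp (tendsto_pow_atTop two_ne_zero))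

lemma erfc_le_two (z : ℝ) : erfc z ≤ 2 := by
  have h1 := erfc_nonneg (-z)
  have h2 := erfc_neg z
  have h3 := erfc_neg (-z)
  rw [neg_neg] at h3
  linarith

lemma tendsto_erfc_atTop : Tendsto erfc atTop (𝓝 0) := by
  apply squeeze_zero' (Eventually.of_forall erfc_nonneg)
    (eventually_atTop.2 ⟨0, fun z hz => erfc_le z hz⟩)
  simpa using tendsto_exp_neg_sq.const_mul 2

lemma tendsto_erfc_atBot : Tendsto erfc atBot (𝓝 2) := by
  have h : Tendsto (fun z => 2 - erfc (-z)) atBot (𝓝 2) := by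
    have := (tendsto_erfc_atTop.comp tendsto_neg_atBot_atTop).const_sub 2
    simpa using this
  apply h.congr
  intro z
  have := erfc_neg (-z); rw [neg_neg] at this; linarith



set_option maxHeartbeats 2000000 in
theorem aux (a b : ℝ) (ha : 0 < a) (hb : 0 ≤ b) :
    ∫ t in Ioi (0:ℝ),
      ((1/2) * erfc (a * Real.sqrt t - b / Real.sqrt t)
        + (Real.exp (4*(a*b))/2) * erfc (a * Real.sqrt t + b / Real.sqrt t))
      = 1/(2*a^2) + b/a := by
  have hππ : (0:ℝ) < Real.sqrt π := Real.sqrt_pos.2 Real.pi_pos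
  set Zf : ℝ → ℝ := fun t =>
    (1/2) * erfc (a * Real.sqrt t - b / Real.sqrt t)
      + (Real.exp (4*(a*b))/2) * erfc (a * Real.sqrt t + b / Real.sqrt t) with hZf
  set c1 : ℝ := 1/(4*a^2) + b/(2*a) with hc1
  set c2 : ℝ := 1/(4*a^2) - b/(2*a) with hc2
  set G : ℝ → ℝ := fun t => t * Zf t
      - (Real.exp (2*(a*b))/(a*Real.sqrt π)) * (Real.sqrt t * Real.exp (-(a^2*t + b^2/t)))
      - c1 * erfc (a * Real.sqrt t - b / Real.sqrt t)
      - c2 * Real.exp (4*(a*b)) * erfc (a * Real.sqrt t + b / Real.sqrt t) with hG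
  set H : ℝ → ℝ := fun t => if t ≤ 0 then -(2*c1) else G t with hH
  -- exponential identities
  have hexpu : ∀ t : ℝ, 0 < t → Real.exp (-(a * Real.sqrt t - b / Real.sqrt t) ^ 2)
      = Real.exp (2*(a*b)) * Real.exp (-(a^2*t + b^2/t)) := by
    intro t ht
    rw [← Real.exp_add]
    congr 1
    have hsne : Real.sqrt t ≠ 0 := ne_of_gt (Real.sqrt_pos.2 ht)
    set s := Real.sqrt t with hs
    rw [show t = s^2 from (Real.sq_sqrt ht.le).symm]
    field_simp
    ring
  have hexpv : ∀ t : ℝ, 0 < t → Real.exp (-(a * Real.sqrt t + b / Real.sqrt t) ^ 2)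
      = Real.exp (-(a^2*t + b^2/t)) / Real.exp (2*(a*b)) := by
    intro t ht
    rw [← Real.exp_sub]
    congr 1
    have hsne : Real.sqrt t ≠ 0 := ne_of_gt (Real.sqrt_pos.2 ht)
    set s := Real.sqrt t with hs
    rw [show t = s^2 from (Real.sq_sqrt ht.le).symm]
    field_simp
    ring
  have hderiv : ∀ t ∈ Ioi (0:ℝ), HasDerivAt H (Zf t) t := by
    intro t ht
    have ht0 : (0:ℝ) < t := ht
    have hne : t ≠ 0 := ne_of_gt ht0
    have hs0 : 0 < Real.sqrt t := Real.sqrt_pos.2 ht0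
    have hsne : Real.sqrt t ≠ 0 := ne_of_gt hs0
    have Hsq : HasDerivAt Real.sqrt (1/(2*Real.sqrt t)) t := Real.hasDerivAt_sqrt hne
    have Hu : HasDerivAt (fun y : ℝ => a * Real.sqrt y - b / Real.sqrt y)
        (a * (1/(2*Real.sqrt t)) - (0 * Real.sqrt t - b * (1/(2*Real.sqrt t))) / Real.sqrt t ^ 2) t :=
      (Hsq.const_mul a).sub ((hasDerivAt_const t b).div Hsq hsne)
    have Hv : HasDerivAt (fun y : ℝ => a * Real.sqrt y + b / Real.sqrt y)
        (a * (1/(2*Real.sqrt t)) + (0 * Real.sqrt t - b * (1/(2*Real.sqrt t))) / Real.sqrt t ^ 2) t :=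
      (Hsq.const_mul a).add ((hasDerivAt_const t b).div Hsq hsne)
    have Heu : HasDerivAt (fun y : ℝ => erfc (a * Real.sqrt y - b / Real.sqrt y))
        (-(2 / Real.sqrt π) * Real.exp (-(a * Real.sqrt t - b / Real.sqrt t) ^ 2) *
          (a * (1/(2*Real.sqrt t)) - (0 * Real.sqrt t - b * (1/(2*Real.sqrt t))) / Real.sqrt t ^ 2)) t :=
      (hasDerivAt_erfc _).comp t Hu
    have Hev : HasDerivAt (fun y : ℝ => erfc (a * Real.sqrt y + b / Real.sqrt y))
        (-(2 / Real.sqrt π) * Real.exp (-(a * Real.sqrt t + b / Real.sqrt t) ^ 2) *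
          (a * (1/(2*Real.sqrt t)) + (0 * Real.sqrt t - b * (1/(2*Real.sqrt t))) / Real.sqrt t ^ 2)) t :=
      (hasDerivAt_erfc _).comp t Hv
    have Hphi : HasDerivAt (fun y : ℝ => -(a^2*y + b^2/y))
        (-(a^2 * 1 + (0 * t - b^2 * 1) / t ^ 2)) t :=
      (((hasDerivAt_id t).const_mul (a^2)).add ((hasDerivAt_const t (b^2)).div (hasDerivAt_id t) hne)).neg
    have HP : HasDerivAt (fun y : ℝ => Real.exp (-(a^2*y + b^2/y)))
        (Real.exp (-(a^2*t + b^2/t)) * -(a^2 * 1 + (0 * t - b^2 * 1) / t ^ 2)) t :=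
      (Real.hasDerivAt_exp _).comp t Hphi
    have HsP : HasDerivAt (fun y : ℝ => Real.sqrt y * Real.exp (-(a^2*y + b^2/y)))
        (1/(2*Real.sqrt t) * Real.exp (-(a^2*t + b^2/t)) +
         Real.sqrt t * (Real.exp (-(a^2*t + b^2/t)) * -(a^2 * 1 + (0 * t - b^2 * 1) / t ^ 2))) t :=
      Hsq.mul HP
    have main := ((((hasDerivAt_id t).mul ((Heu.const_mul (1/2:ℝ)).add
          (Hev.const_mul (Real.exp (4*(a*b))/2)))).sub
          (HsP.const_mul (Real.exp (2*(a*b))/(a*Real.sqrt π)))).sub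
          (Heu.const_mul c1)).sub
          (Hev.const_mul (c2 * Real.exp (4*(a*b))))
    have hHGev : H =ᶠ[𝓝 t] (fun y : ℝ =>
        y * ((1/2) * erfc (a * Real.sqrt y - b / Real.sqrt y)
          + (Real.exp (4*(a*b))/2) * erfc (a * Real.sqrt y + b / Real.sqrt y))
        - (Real.exp (2*(a*b))/(a*Real.sqrt π)) * (Real.sqrt y * Real.exp (-(a^2*y + b^2/y)))
        - c1 * erfc (a * Real.sqrt y - b / Real.sqrt y)
        - c2 * Real.exp (4*(a*b)) * erfc (a * Real.sqrt y + b / Real.sqrt y)) := by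
      filter_upwards [Ioi_mem_nhds ht0] with y hy
      simp only [hH, hG, hZf, if_neg (not_le.2 (mem_Ioi.1 hy))]
    have main2 := main.congr_of_eventuallyEq hHGev
    refine main2.congr_deriv ?_
    symm
    simp only [hZf, Pi.add_apply, id, one_mul]
    rw [hexpu t ht0, hexpv t ht0,
      show Real.exp (4*(a*b)) = Real.exp (2*(a*b)) * Real.exp (2*(a*b)) by
        rw [← Real.exp_add]; ring_nf]
    have hA0 : Real.exp (2*(a*b)) ≠ 0 := Real.exp_ne_zero _
    have hπne : Real.sqrt π ≠ 0 := ne_of_gt hππ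
    have hane : a ≠ 0 := ne_of_gt ha
    have hts : Real.sqrt t ^ 2 = t := Real.sq_sqrt ht0.le
    generalize Real.exp (-(a^2*t + b^2/t)) = P
    generalize Real.exp (2*(a*b)) = A at hA0 ⊢
    generalize erfc (a * Real.sqrt t - b / Real.sqrt t) = E1
    generalize erfc (a * Real.sqrt t + b / Real.sqrt t) = E2
    generalize hsq : Real.sqrt t = sv at hts hsne ⊢
    rw [← hts, hc1, hc2]
    field_simp
    ring
  have hnonneg : ∀ t ∈ Ioi (0:ℝ), 0 ≤ Zf t := by
    intro t _
    have := erfc_nonneg (a * Real.sqrt t - b / Real.sqrt t)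
    have := erfc_nonneg (a * Real.sqrt t + b / Real.sqrt t)
    have := Real.exp_pos (4*(a*b))
    positivity
  have hE2 : Real.exp (4*(a*b)) = Real.exp (2*(a*b)) * Real.exp (2*(a*b)) := by
    rw [← Real.exp_add]; ring_nf
  have htop : Tendsto H atTop (𝓝 0) := by
    have Texp : Tendsto (fun t : ℝ => t * Real.exp (-(a^2*t))) atTop (𝓝 0) := by
      have h1 := (tendsto_pow_mul_exp_neg_atTop_nhds_zero 1).comp
        (Tendsto.const_mul_atTop (by positivity : (0:ℝ) < a^2) tendsto_id)
      have h2 := h1.const_mul (1/a^2)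
      rw [mul_zero] at h2
      apply h2.congr
      intro t
      simp only [Function.comp, id]
      field_simp
    have hUt : Tendsto (fun t : ℝ => a * Real.sqrt t - b / Real.sqrt t) atTop atTop := by
      apply tendsto_atTop_mono' atTop _
        (tendsto_atTop_add_const_right atTop (-b) (Tendsto.const_mul_atTop ha _root_.tendsto_sqrt_atTop))
      filter_upwards [eventually_ge_atTop (1:ℝ)] with t ht1
      have hs1 : 1 ≤ Real.sqrt t := by
        rw [show (1:ℝ) = Real.sqrt 1 by simp]; exact Real.sqrt_le_sqrt ht1
      have hbd : b / Real.sqrt t ≤ b := by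
        rw [div_le_iff₀ (by linarith)]; nlinarith
      show a * Real.sqrt t + (-b) ≤ a * Real.sqrt t - b / Real.sqrt t
      linarith
    have hVt : Tendsto (fun t : ℝ => a * Real.sqrt t + b / Real.sqrt t) atTop atTop := by
      apply tendsto_atTop_mono' atTop _
        (tendsto_atTop_add_const_right atTop (-b) (Tendsto.const_mul_atTop ha _root_.tendsto_sqrt_atTop))
      filter_upwards [eventually_ge_atTop (1:ℝ)] with t ht1
      have hs1 : 1 ≤ Real.sqrt t := by
        rw [show (1:ℝ) = Real.sqrt 1 by simp]; exact Real.sqrt_le_sqrt ht1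
      have hbd : 0 ≤ b / Real.sqrt t := div_nonneg hb (by linarith)
      show a * Real.sqrt t + (-b) ≤ a * Real.sqrt t + b / Real.sqrt t
      linarith
    have T3 : Tendsto (fun t : ℝ => erfc (a * Real.sqrt t - b / Real.sqrt t)) atTop (𝓝 0) :=
      tendsto_erfc_atTop.comp hUt
    have T4 : Tendsto (fun t : ℝ => erfc (a * Real.sqrt t + b / Real.sqrt t)) atTop (𝓝 0) :=
      tendsto_erfc_atTop.comp hVt
    have T2 : Tendsto (fun t : ℝ => Real.sqrt t * Real.exp (-(a^2*t + b^2/t))) atTop (𝓝 0) := by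
      apply squeeze_zero' (g := fun t : ℝ => t * Real.exp (-(a^2*t)))
      · filter_upwards with t
        positivity
      · filter_upwards [eventually_ge_atTop (1:ℝ)] with t ht1
        have ht0 : (0:ℝ) < t := by linarith
        have h1 : Real.sqrt t ≤ t := by
          have hs1 : 1 ≤ Real.sqrt t := by
            rw [show (1:ℝ) = Real.sqrt 1 by simp]; exact Real.sqrt_le_sqrt ht1
          nlinarith [Real.mul_self_sqrt ht0.le]
        have h2 : Real.exp (-(a^2*t + b^2/t)) ≤ Real.exp (-(a^2*t)) := by
          apply Real.exp_le_exp.2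
          have : 0 ≤ b^2/t := by positivity
          linarith
        apply mul_le_mul h1 h2 (Real.exp_pos _).le (by linarith)
      · exact Texp
    have T1 : Tendsto (fun t : ℝ => t * Zf t) atTop (𝓝 0) := by
      apply squeeze_zero' (g := fun t : ℝ => (2*Real.exp (2*(a*b))) * (t * Real.exp (-(a^2*t))))
      · filter_upwards [eventually_ge_atTop (0:ℝ)] with t ht0
        have h1 := erfc_nonneg (a * Real.sqrt t - b / Real.sqrt t)
        have h2 := erfc_nonneg (a * Real.sqrt t + b / Real.sqrt t)
        have h3 := (Real.exp_pos (4*(a*b))).le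
        simp only [hZf]
        positivity
      · filter_upwards [eventually_ge_atTop (1:ℝ), eventually_ge_atTop (b/a)] with t ht1 htb
        have ht0 : (0:ℝ) < t := by linarith
        have hs0 : 0 < Real.sqrt t := Real.sqrt_pos.2 ht0
        have hst : Real.sqrt t * Real.sqrt t = t := Real.mul_self_sqrt ht0.le
        have hu0 : 0 ≤ a * Real.sqrt t - b / Real.sqrt t := by
          rw [sub_nonneg, div_le_iff₀ hs0]
          calc b ≤ a * t := by rw [div_le_iff₀ ha] at htb; linarith
            _ = a * Real.sqrt t * Real.sqrt t := by rw [mul_assoc, hst]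
        have hv0 : 0 ≤ a * Real.sqrt t + b / Real.sqrt t := by positivity
        have heu := erfc_le _ hu0
        have hev := erfc_le _ hv0
        rw [hexpu t ht0] at heu
        rw [hexpv t ht0] at hev
        have hP : Real.exp (-(a^2*t + b^2/t)) ≤ Real.exp (-(a^2*t)) := by
          apply Real.exp_le_exp.2
          have : 0 ≤ b^2/t := by positivity
          linarith
        have hZb : Zf t ≤ (2*Real.exp (2*(a*b))) * Real.exp (-(a^2*t)) := by
          simp only [hZf]
          have hA := Real.exp_pos (2*(a*b))
          have hP2 := Real.exp_pos (-(a^2*t + b^2/t))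
          calc (1/2) * erfc (a * Real.sqrt t - b / Real.sqrt t)
              + (Real.exp (4*(a*b))/2) * erfc (a * Real.sqrt t + b / Real.sqrt t)
              ≤ (1/2) * (2 * (Real.exp (2*(a*b)) * Real.exp (-(a^2*t + b^2/t))))
                + (Real.exp (4*(a*b))/2) * (2 * (Real.exp (-(a^2*t + b^2/t)) / Real.exp (2*(a*b)))) := by
                have := erfc_nonneg (a * Real.sqrt t + b / Real.sqrt t)
                have h4 := (Real.exp_pos (4*(a*b))).le
                gcongr
            _ = (2*Real.exp (2*(a*b))) * Real.exp (-(a^2*t + b^2/t)) := by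
                rw [hE2]; field_simp; ring
            _ ≤ (2*Real.exp (2*(a*b))) * Real.exp (-(a^2*t)) := by
                have := (Real.exp_pos (2*(a*b))).le
                gcongr
        calc t * Zf t ≤ t * ((2*Real.exp (2*(a*b))) * Real.exp (-(a^2*t))) := by
              apply mul_le_mul_of_nonneg_left hZb ht0.le
          _ = (2*Real.exp (2*(a*b))) * (t * Real.exp (-(a^2*t))) := by ring
      · simpa using Texp.const_mul (2*Real.exp (2*(a*b)))
    have hG0 : Tendsto G atTop (𝓝 0) := by
      have h := ((T1.sub (T2.const_mul (Real.exp (2*(a*b))/(a*Real.sqrt π)))).sub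
        (T3.const_mul c1)).sub (T4.const_mul (c2 * Real.exp (4*(a*b))))
      rw [show (0:ℝ) - (Real.exp (2*(a*b))/(a*Real.sqrt π)) * 0 - c1 * 0
        - (c2 * Real.exp (4*(a*b))) * 0 = 0 by ring] at h
      exact h
    apply hG0.congr'
    filter_upwards [eventually_gt_atTop (0:ℝ)] with t ht0
    simp [hH, if_neg (not_le.2 ht0)]
  have hcont : ContinuousWithinAt H (Ici 0) 0 := by
    have hsq0 : Tendsto (fun t : ℝ => Real.sqrt t) (𝓝[>] (0:ℝ)) (𝓝 0) := by
      have := (Real.continuous_sqrt.tendsto 0).mono_left (nhdsWithin_le_nhds (s := Ioi (0:ℝ)))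
      simpa using this
    have l1 : Tendsto (fun t : ℝ => t * Zf t) (𝓝[>] (0:ℝ)) (𝓝 0) := by
      apply squeeze_zero' (g := fun t : ℝ => t * (1 + Real.exp (4*(a*b))))
      · filter_upwards [self_mem_nhdsWithin] with t ht
        have ht0 : (0:ℝ) < t := ht
        have h1 := erfc_nonneg (a * Real.sqrt t - b / Real.sqrt t)
        have h2 := erfc_nonneg (a * Real.sqrt t + b / Real.sqrt t)
        have h3 := (Real.exp_pos (4*(a*b))).le
        simp only [hZf]
        positivity
      · filter_upwards [self_mem_nhdsWithin] with t ht
        have ht0 : (0:ℝ) < t := ht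
        have h1 := erfc_le_two (a * Real.sqrt t - b / Real.sqrt t)
        have h2 := erfc_le_two (a * Real.sqrt t + b / Real.sqrt t)
        have h3 := (Real.exp_pos (4*(a*b))).le
        simp only [hZf]
        have h4 : Real.exp (4*(a*b)) / 2 * erfc (a * Real.sqrt t + b / Real.sqrt t)
            ≤ Real.exp (4*(a*b)) / 2 * 2 := by
          apply mul_le_mul_of_nonneg_left h2 (by positivity)
        nlinarith
      · have h5 : Tendsto (fun t : ℝ => t * (1 + Real.exp (4*(a*b)))) (𝓝 (0:ℝ))
            (𝓝 (0 * (1 + Real.exp (4*(a*b))))) :=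
          (continuous_id.mul continuous_const).tendsto 0
        have h6 := h5.mono_left (nhdsWithin_le_nhds (s := Ioi (0:ℝ)))
        simpa using h6
    have l2 : Tendsto (fun t : ℝ => Real.sqrt t * Real.exp (-(a^2*t + b^2/t))) (𝓝[>] (0:ℝ)) (𝓝 0) := by
      apply squeeze_zero' (g := fun t : ℝ => Real.sqrt t)
      · filter_upwards with t; positivity
      · filter_upwards [self_mem_nhdsWithin] with t ht
        have ht0 : (0:ℝ) < t := ht
        have hP1 : Real.exp (-(a^2*t + b^2/t)) ≤ 1 := by
          rw [Real.exp_le_one_iff]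
          have h1 : 0 ≤ a^2*t := by positivity
          have h2 : 0 ≤ b^2/t := by positivity
          linarith
        nth_rewrite 2 [show Real.sqrt t = Real.sqrt t * 1 by ring]
        exact mul_le_mul_of_nonneg_left hP1 (Real.sqrt_nonneg t)
      · exact hsq0
    have hGlim : Tendsto G (𝓝[>] (0:ℝ)) (𝓝 (-(2*c1))) := by
      rcases eq_or_lt_of_le hb with hb0 | hbpos
      · -- b = 0
        obtain rfl : b = 0 := hb0.symm
        have leru : Tendsto (fun t : ℝ => erfc (a * Real.sqrt t - 0 / Real.sqrt t))
            (𝓝[>] (0:ℝ)) (𝓝 1) := by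
          have hc : Tendsto (fun t : ℝ => a * Real.sqrt t - 0 / Real.sqrt t) (𝓝[>] (0:ℝ)) (𝓝 0) := by
            have := (hsq0.const_mul a)
            simp only [mul_zero] at this
            apply this.congr'
            filter_upwards with t
            simp
          have := (continuous_erfc.tendsto 0).comp hc
          rwa [erfc_zero] at this
        have lerv : Tendsto (fun t : ℝ => erfc (a * Real.sqrt t + 0 / Real.sqrt t))
            (𝓝[>] (0:ℝ)) (𝓝 1) := by
          have hc : Tendsto (fun t : ℝ => a * Real.sqrt t + 0 / Real.sqrt t) (𝓝[>] (0:ℝ)) (𝓝 0) := by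
            have := (hsq0.const_mul a)
            simp only [mul_zero] at this
            apply this.congr'
            filter_upwards with t
            simp
          have := (continuous_erfc.tendsto 0).comp hc
          rwa [erfc_zero] at this
        have h := ((l1.sub (l2.const_mul (Real.exp (2*(a*0))/(a*Real.sqrt π)))).sub
          (leru.const_mul c1)).sub (lerv.const_mul (c2 * Real.exp (4*(a*0))))
        have hval : (0:ℝ) - (Real.exp (2*(a*0))/(a*Real.sqrt π)) * 0 - c1 * 1
            - (c2 * Real.exp (4*(a*0))) * 1 = -(2*c1) := by
          simp only [hc1, hc2, mul_zero, Real.exp_zero]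
          field_simp
          norm_num
        rw [hval] at h
        exact h
      · -- b > 0
        have hsqpos : Tendsto (fun t : ℝ => Real.sqrt t) (𝓝[>] (0:ℝ)) (𝓝[>] (0:ℝ)) := by
          rw [tendsto_nhdsWithin_iff]
          refine ⟨hsq0, ?_⟩
          filter_upwards [self_mem_nhdsWithin] with t ht
          exact Real.sqrt_pos.2 ht
        have hinv : Tendsto (fun t : ℝ => b / Real.sqrt t) (𝓝[>] (0:ℝ)) atTop := by
          have := Tendsto.const_mul_atTop hbpos (tendsto_inv_nhdsGT_zero.comp hsqpos)
          apply this.congr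
          intro t
          simp [div_eq_mul_inv, Function.comp]
        have hu_bot : Tendsto (fun t : ℝ => a * Real.sqrt t - b / Real.sqrt t) (𝓝[>] (0:ℝ)) atBot := by
          have := Tendsto.add_atBot (by simpa using hsq0.const_mul a)
            (tendsto_neg_atTop_atBot.comp hinv)
          apply this.congr
          intro t
          simp [Function.comp, sub_eq_add_neg]
        have hv_top : Tendsto (fun t : ℝ => a * Real.sqrt t + b / Real.sqrt t) (𝓝[>] (0:ℝ)) atTop :=
          Tendsto.add_atTop (by simpa using hsq0.const_mul a) hinv
        have leru := tendsto_erfc_atBot.comp hu_bot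
        have lerv := tendsto_erfc_atTop.comp hv_top
        have h := ((l1.sub (l2.const_mul (Real.exp (2*(a*b))/(a*Real.sqrt π)))).sub
          (leru.const_mul c1)).sub (lerv.const_mul (c2 * Real.exp (4*(a*b))))
        have hval : (0:ℝ) - (Real.exp (2*(a*b))/(a*Real.sqrt π)) * 0 - c1 * 2
            - (c2 * Real.exp (4*(a*b))) * 0 = -(2*c1) := by ring
        rw [hval] at h
        exact h
    have hHq : Tendsto H (𝓝[>] (0:ℝ)) (𝓝 (-(2*c1))) := by
      apply hGlim.congr'
      filter_upwards [self_mem_nhdsWithin] with t ht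
      simp [hH, if_neg (not_le.2 (mem_Ioi.1 ht))]
    unfold ContinuousWithinAt
    rw [show (Ici (0:ℝ)) = insert 0 (Ioi 0) from Ioi_insert.symm, nhdsWithin_insert,
      tendsto_sup]
    constructor
    · exact tendsto_pure_nhds H 0
    · rw [show H 0 = -(2*c1) by simp [hH]]
      exact hHq
  have hint := integral_Ioi_of_hasDerivAt_of_nonneg hcont hderiv hnonneg htop
  have hH0 : H 0 = -(2*c1) := by simp [hH]
  rw [hint, hH0, hc1]
  have hane : a ≠ 0 := ne_of_gt ha
  field_simp
  ring

theorem stmt4 (D k x : ℝ) (hD : 0 < D) (hk : 0 < k) (hx : 0 ≤ x)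
    (ξ : ℝ) (hξ : ξ = Real.sqrt (D / k))
    (Z : ℝ → ℝ)
    (hZ : ∀ t > 0, Z t =
      (1 / 2) * erfc (Real.sqrt (D * t) / ξ - x / (2 * Real.sqrt (D * t))) +
      (Real.exp (2 * x / ξ) / 2) * erfc (Real.sqrt (D * t) / ξ + x / (2 * Real.sqrt (D * t)))) :
    ∫ t in Set.Ioi (0:ℝ), Z t = (1 / (2 * k)) * (1 + x * Real.sqrt (k / D)) := by
  have hsD : 0 < Real.sqrt D := Real.sqrt_pos.2 hD
  have hsk : 0 < Real.sqrt k := Real.sqrt_pos.2 hk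
  have hDne : Real.sqrt D ≠ 0 := ne_of_gt hsD
  have hkne : Real.sqrt k ≠ 0 := ne_of_gt hsk
  have hξ' : ξ = Real.sqrt D / Real.sqrt k := by
    rw [hξ, Real.sqrt_div hD.le]
  have hξne : ξ ≠ 0 := by rw [hξ']; positivity
  have hmain := aux (Real.sqrt k) (x / (2 * Real.sqrt D)) hsk (by positivity)
  have hcong : ∫ t in Set.Ioi (0:ℝ), Z t = ∫ t in Set.Ioi (0:ℝ),
      ((1/2) * erfc (Real.sqrt k * Real.sqrt t - (x / (2 * Real.sqrt D)) / Real.sqrt t)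
        + (Real.exp (4*(Real.sqrt k*(x / (2 * Real.sqrt D))))/2)
          * erfc (Real.sqrt k * Real.sqrt t + (x / (2 * Real.sqrt D)) / Real.sqrt t)) := by
    apply setIntegral_congr_fun measurableSet_Ioi
    intro t ht
    have ht0 : 0 < t := ht
    have hst0 : 0 < Real.sqrt t := Real.sqrt_pos.2 ht0
    have hstne : Real.sqrt t ≠ 0 := ne_of_gt hst0
    have hsDt : Real.sqrt (D * t) = Real.sqrt D * Real.sqrt t := Real.sqrt_mul hD.le t
    have e1 : Real.sqrt (D*t) / ξ = Real.sqrt k * Real.sqrt t := by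
      rw [hsDt, hξ']
      field_simp
    have e2 : x / (2 * Real.sqrt (D*t)) = (x / (2*Real.sqrt D)) / Real.sqrt t := by
      rw [hsDt, div_div]
      ring_nf
    have e3 : 2 * x / ξ = 4*(Real.sqrt k*(x / (2 * Real.sqrt D))) := by
      rw [hξ']
      field_simp
      ring
    rw [hZ t ht0, e1, e2, e3]
  rw [hcong, hmain]
  have hkk : Real.sqrt k * Real.sqrt k = k := Real.mul_self_sqrt hk.le
  have hkd : Real.sqrt (k/D) = Real.sqrt k / Real.sqrt D := Real.sqrt_div hk.le D
  rw [hkd, show Real.sqrt k ^ 2 = k from Real.sq_sqrt hk.le]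
  have hkk2 : Real.sqrt k ^ 2 = k := Real.sq_sqrt hk.le
  field_simp
  ring_nf
  linear_combination (-x) * hkk2
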